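/- Let ψ̄ : K(n) → K(n) be an additive bijection and χ : K(n) → kˣ any map, and define ψ : G(n) → G(n) by ψ((α, v)) := (α·χ(v), ψ̄(v)). Then: (i) ψ is a group homomorphism if and only if χ satisfies the ψ̄-semi-character identity; (ii) if ψ is a group homomorphism then ψ̄ preserves the pairing e_n, and ψ is an automorphism of G(n) restricting to the identity on the center kˣ×{0}×{0} and inducing ψ̄ on K(n); (iii) ψ ∘ D₋₁ = D₋₁ ∘ ψ if and only if χ is symmetric; (iv) conversely, every automorphism of G(n) restricting to the identity on kˣ×{0}×{0} equals such a ψ for a unique pair (ψ̄, χ) with χ a ψ̄-semi-character. -/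

import Mathlib

namespace ThetaPaper

variable {g n : ℕ} {k : Type*} [Field k]

/-- `Z(n) = (ℤ/nℤ)^g`. -/
abbrev ZGrp (g n : ℕ) := Fin g → ZMod n

/-- `Ẑ(n) = Hom(Z(n), kˣ)`, the group of `kˣ`-valued characters of `Z(n)`,
written additively. -/
abbrev ZHat (g n : ℕ) (k : Type*) [Field k] := AddChar (ZGrp g n) kˣ

/-- `K(n) = Z(n) × Ẑ(n)`. -/
abbrev KGrp (g n : ℕ) (k : Type*) [Field k] := ZGrp g n × ZHat g n k

/-- The commutator pairing `e_n((x₁,y₁),(x₂,y₂)) = y₁(x₂)·y₂(x₁)⁻¹`. -/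
def en (v w : KGrp g n k) : kˣ := v.2 w.1 * (w.2 v.1)⁻¹

/-- The level-`n` Heisenberg group `G(n)`, as the set `kˣ × Z(n) × Ẑ(n)`. -/
@[ext]
structure Heis (g n : ℕ) (k : Type*) [Field k] where
  t : kˣ
  x : ZGrp g n
  y : ZHat g n k

namespace Heis

/-- The Heisenberg multiplication
`(α₁,x₁,y₁)·(α₂,x₂,y₂) = (α₁α₂·y₂(x₁), x₁+x₂, y₁+y₂)`. -/
instance : Mul (Heis g n k) :=
  ⟨fun a b => ⟨a.t * b.t * b.y a.x, a.x + b.x, a.y + b.y⟩⟩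

instance : One (Heis g n k) := ⟨⟨1, 0, 0⟩⟩

instance : Inv (Heis g n k) :=
  ⟨fun a => ⟨a.t⁻¹ * a.y a.x, -a.x, -a.y⟩⟩

@[simp] lemma mul_t (a b : Heis g n k) : (a * b).t = a.t * b.t * b.y a.x := rfl
@[simp] lemma mul_x (a b : Heis g n k) : (a * b).x = a.x + b.x := rfl
@[simp] lemma mul_y (a b : Heis g n k) : (a * b).y = a.y + b.y := rfl
@[simp] lemma one_t : (1 : Heis g n k).t = 1 := rfl
@[simp] lemma one_x : (1 : Heis g n k).x = 0 := rfl
@[simp] lemma one_y : (1 : Heis g n k).y = 0 := rfl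
@[simp] lemma inv_t (a : Heis g n k) : a⁻¹.t = a.t⁻¹ * a.y a.x := rfl
@[simp] lemma inv_x (a : Heis g n k) : a⁻¹.x = -a.x := rfl
@[simp] lemma inv_y (a : Heis g n k) : a⁻¹.y = -a.y := rfl

instance : Group (Heis g n k) :=
  Group.ofLeftAxioms
    (fun a b c => by
      ext <;>
        simp [AddChar.map_add_eq_mul, mul_assoc, mul_comm, mul_left_comm, add_assoc])
    (fun a => by ext <;> simp)
    (fun a => by
      ext <;> simp [AddChar.map_neg_eq_inv, mul_comm, mul_left_comm, mul_assoc])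

/-- The canonical projection `π : G(n) → K(n)`, `(α,x,y) ↦ (x,y)`. -/
def toK (h : Heis g n k) : KGrp g n k := (h.x, h.y)

/-- The automorphism `D₋₁ : (α,x,y) ↦ (α,−x,−y)`. -/
def Dneg (h : Heis g n k) : Heis g n k := ⟨h.t, -h.x, -h.y⟩

/-- A symmetric element of the Heisenberg group: `D₋₁(h) = h⁻¹`. -/
def IsSymElem (h : Heis g n k) : Prop := Dneg h = h⁻¹

end Heis

/-- The `ψ`-semi-character identity:
`χ(v+w) = χ(v)·χ(w)·[ψ(w)₂(ψ(v)₁)]·[w₂(v₁)]⁻¹`. -/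
def IsSemiChar (ψ : KGrp g n k → KGrp g n k) (χ : KGrp g n k → kˣ) : Prop :=
  ∀ v w : KGrp g n k,
    χ (v + w) = χ v * χ w * (ψ w).2 (ψ v).1 * ((w.2 v.1)⁻¹ : kˣ)

/-- A symmetric (semi-)character: `χ(−v) = χ(v)`. -/
def IsSymmChar (χ : KGrp g n k → kˣ) : Prop := ∀ v : KGrp g n k, χ (-v) = χ v

/-- `ψ̄ ∈ Sp(K(n))`: an additive automorphism preserving the pairing `e_n`. -/
def IsSymplectic (ψ : KGrp g n k ≃+ KGrp g n k) : Prop :=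
  ∀ v w : KGrp g n k, en (ψ v) (ψ w) = en v w


/-- The map `ψ : G(n) → G(n)`, `(α, v) ↦ (α·χ(v), ψ̄(v))`, associated to a map
`ψ̄ : K(n) → K(n)` and a map `χ : K(n) → kˣ`. -/
def liftedMap (ψb : KGrp g n k → KGrp g n k) (χ : KGrp g n k → kˣ)
    (h : Heis g n k) : Heis g n k :=
  ⟨h.t * χ h.toK, (ψb h.toK).1, (ψb h.toK).2⟩

@[simp] lemma liftedMap_t (ψb : KGrp g n k → KGrp g n k) (χ : KGrp g n k → kˣ)
    (h : Heis g n k) : (liftedMap ψb χ h).t = h.t * χ h.toK := rfl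
@[simp] lemma liftedMap_x (ψb : KGrp g n k → KGrp g n k) (χ : KGrp g n k → kˣ)
    (h : Heis g n k) : (liftedMap ψb χ h).x = (ψb h.toK).1 := rfl
@[simp] lemma liftedMap_y (ψb : KGrp g n k → KGrp g n k) (χ : KGrp g n k → kˣ)
    (h : Heis g n k) : (liftedMap ψb χ h).y = (ψb h.toK).2 := rfl

@[simp] lemma toK_mk (t : kˣ) (x : ZGrp g n) (y : ZHat g n k) :
    (Heis.mk t x y).toK = (x, y) := rfl

@[simp] lemma toK_mk' (t : kˣ) (v : KGrp g n k) :
    (Heis.mk t v.1 v.2).toK = v := rfl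

lemma toK_mul (a b : Heis g n k) : (a * b).toK = a.toK + b.toK := rfl

@[simp] lemma liftedMap_toK (ψb : KGrp g n k → KGrp g n k) (χ : KGrp g n k → kˣ)
    (h : Heis g n k) : (liftedMap ψb χ h).toK = ψb h.toK := rfl

@[simp] lemma toK_x (h : Heis g n k) : h.toK.1 = h.x := rfl
@[simp] lemma toK_y (h : Heis g n k) : h.toK.2 = h.y := rfl

@[simp] lemma zhat_zero_add (y : ZHat g n k) : 0 + y = y := zero_add y
@[simp] lemma zhat_add_zero (y : ZHat g n k) : y + 0 = y := add_zero y
@[simp] lemma kgrp_zero_add (v : KGrp g n k) : 0 + v = v := zero_add v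
@[simp] lemma kgrp_add_zero (v : KGrp g n k) : v + 0 = v := add_zero v

private lemma grp_aux {G : Type*} [CommGroup G] {A X Y a b : G}
    (h : A * X * b⁻¹ = A * Y * a⁻¹) : Y * X⁻¹ = a * b⁻¹ := by
  rw [mul_assoc, mul_assoc] at h
  have h2 : X * b⁻¹ = Y * a⁻¹ := mul_left_cancel h
  calc Y * X⁻¹ = (Y * a⁻¹) * (a * X⁻¹) := by rw [mul_assoc, inv_mul_cancel_left]
    _ = (X * b⁻¹) * (a * X⁻¹) := by rw [h2]
    _ = a * b⁻¹ := by
        rw [mul_comm a X⁻¹, mul_mul_mul_comm]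
        simp [mul_comm]

/-- Part (i), for an arbitrary additive map. -/
lemma hom_iff_semiChar (ψb : KGrp g n k → KGrp g n k)
    (hadd : ∀ v w : KGrp g n k, ψb (v + w) = ψb v + ψb w)
    (χ : KGrp g n k → kˣ) :
    (∀ a b : Heis g n k,
        liftedMap ψb χ (a * b) = liftedMap ψb χ a * liftedMap ψb χ b) ↔
      IsSemiChar ψb χ := by
  constructor
  · intro H v w
    have h := congrArg Heis.t (H ⟨1, v.1, v.2⟩ ⟨1, w.1, w.2⟩)
    simp only [Heis.mul_t, liftedMap_t, toK_mk', toK_mul, toK_mk,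
      liftedMap_x, liftedMap_y, one_mul] at h
    rw [eq_mul_inv_iff_mul_eq, mul_comm]
    simpa using h
  · intro H a b
    ext
    · simp only [Heis.mul_t, liftedMap_t, toK_mul, H a.toK b.toK,
        liftedMap_x, liftedMap_y, toK_x, toK_y]
      simp [mul_comm, mul_left_comm, mul_assoc]
    · simp [toK_mul, hadd]
    · simp [toK_mul, hadd]

lemma semiChar_chi_zero (ψb : KGrp g n k → KGrp g n k) (hz : ψb 0 = 0)
    {χ : KGrp g n k → kˣ} (H : IsSemiChar ψb χ) : χ 0 = 1 := by
  have h0 : χ 0 = χ 0 * χ 0 := by simpa [hz] using H 0 0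
  exact left_eq_mul.mp h0

/-- the key decomposition of an automorphism fixing the centre. -/
lemma auto_decomp (f : Heis g n k ≃* Heis g n k)
    (hf : ∀ u : kˣ, f ⟨u, 0, 0⟩ = ⟨u, 0, 0⟩) (h : Heis g n k) :
    f h = liftedMap (fun v => (f ⟨1, v.1, v.2⟩).toK)
      (fun v => (f ⟨1, v.1, v.2⟩).t) h := by
  have hd : h = (⟨h.t, 0, 0⟩ : Heis g n k) * ⟨1, h.x, h.y⟩ := by
    ext <;> simp
  conv_lhs => rw [hd]
  rw [map_mul, hf]
  ext <;> simp [Heis.toK, AddChar.map_zero_eq_one]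

lemma auto_center_symm (f : Heis g n k ≃* Heis g n k)
    (hf : ∀ u : kˣ, f ⟨u, 0, 0⟩ = ⟨u, 0, 0⟩) (u : kˣ) :
    f.symm ⟨u, 0, 0⟩ = ⟨u, 0, 0⟩ := by
  conv_lhs => rw [← hf u]
  exact f.symm_apply_apply _

lemma auto_toK_add (f : Heis g n k ≃* Heis g n k)
    (hf : ∀ u : kˣ, f ⟨u, 0, 0⟩ = ⟨u, 0, 0⟩) (v w : KGrp g n k) :
    (f ⟨1, (v + w).1, (v + w).2⟩).toK
      = (f ⟨1, v.1, v.2⟩).toK + (f ⟨1, w.1, w.2⟩).toK := by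
  have hmul : (⟨1, v.1, v.2⟩ : Heis g n k) * ⟨1, w.1, w.2⟩
      = (⟨w.2 v.1, 0, 0⟩ : Heis g n k) * ⟨1, (v + w).1, (v + w).2⟩ := by
    ext <;> simp [AddChar.map_zero_eq_one]
  have := congrArg Heis.toK (by rw [← map_mul, hmul, map_mul, hf] :
    (f ⟨1, v.1, v.2⟩) * (f ⟨1, w.1, w.2⟩)
      = (⟨w.2 v.1, 0, 0⟩ : Heis g n k) * f ⟨1, (v + w).1, (v + w).2⟩)
  rw [toK_mul, toK_mul] at this
  simpa [Prod.ext_iff] using this.symm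

lemma auto_toK_inv (f : Heis g n k ≃* Heis g n k)
    (hf : ∀ u : kˣ, f ⟨u, 0, 0⟩ = ⟨u, 0, 0⟩) (v : KGrp g n k) :
    (f.symm ⟨1, ((f ⟨1, v.1, v.2⟩).toK).1, ((f ⟨1, v.1, v.2⟩).toK).2⟩).toK
      = v := by
  have h1 : (⟨1, ((f ⟨1, v.1, v.2⟩).toK).1, ((f ⟨1, v.1, v.2⟩).toK).2⟩ :
      Heis g n k)
      = (⟨((f ⟨1, v.1, v.2⟩).t)⁻¹, 0, 0⟩ : Heis g n k) * f ⟨1, v.1, v.2⟩ := by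
    ext <;> simp [AddChar.map_zero_eq_one]
  rw [h1, map_mul, auto_center_symm f hf, f.symm_apply_apply]
  simp [Heis.toK, Prod.ext_iff]

/-- automorphisms of the Heisenberg group fixing the center
correspond to pairs `(ψ̄, χ)` of a symplectic automorphism and a
`ψ̄`-semi-character. -/
theorem heisenberg_automorphisms_via_semicharacters (g n : ℕ) (hg : 1 ≤ g) (hn : 1 ≤ n)
    (k : Type*) [Field k]
    (ψb : KGrp g n k ≃+ KGrp g n k) (χ : KGrp g n k → kˣ) :
    -- (i)
    ((∀ a b : Heis g n k,
        liftedMap (⇑ψb) χ (a * b) = liftedMap (⇑ψb) χ a * liftedMap (⇑ψb) χ b) ↔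
      IsSemiChar (⇑ψb) χ) ∧
    -- (ii)
    ((∀ a b : Heis g n k,
        liftedMap (⇑ψb) χ (a * b) = liftedMap (⇑ψb) χ a * liftedMap (⇑ψb) χ b) →
      (IsSymplectic ψb ∧ Function.Bijective (liftedMap (⇑ψb) χ) ∧
        (∀ u : kˣ, liftedMap (⇑ψb) χ ⟨u, 0, 0⟩ = ⟨u, 0, 0⟩) ∧
        (∀ h : Heis g n k, (liftedMap (⇑ψb) χ h).toK = ψb h.toK))) ∧
    -- (iii)
    ((∀ h : Heis g n k,
        liftedMap (⇑ψb) χ (Heis.Dneg h) = Heis.Dneg (liftedMap (⇑ψb) χ h)) ↔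
      IsSymmChar χ) ∧
    -- (iv)
    (∀ f : Heis g n k ≃* Heis g n k, (∀ u : kˣ, f ⟨u, 0, 0⟩ = ⟨u, 0, 0⟩) →
      ∃! p : (KGrp g n k ≃+ KGrp g n k) × (KGrp g n k → kˣ),
        IsSemiChar (⇑p.1) p.2 ∧ ∀ h : Heis g n k, f h = liftedMap (⇑p.1) p.2 h) := by
  have part1 := hom_iff_semiChar (⇑ψb) (map_add ψb) χ
  refine ⟨part1, ?_, ?_, ?_⟩
  · -- (ii)
    intro H
    have hsc : IsSemiChar (⇑ψb) χ := part1.mp H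
    have hχ0 : χ 0 = 1 := semiChar_chi_zero (⇑ψb) (map_zero ψb) hsc
    refine ⟨?_, ?_, ?_, fun h => rfl⟩
    · intro v w
      have h1 := hsc v w
      have h2 := hsc w v
      rw [add_comm w v, h1, mul_comm (χ w) (χ v)] at h2
      exact grp_aux h2
    · rw [Function.bijective_iff_has_inverse]
      refine ⟨liftedMap (⇑ψb.symm) (fun v => (χ (ψb.symm v))⁻¹), ?_, ?_⟩
      · intro h
        ext
        · simp [mul_assoc]
        · simp
        · simp
      · intro h
        ext
        · simp [mul_assoc]
        · simp
        · simp
    · intro u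
      ext <;> simp [liftedMap, hχ0, Prod.ext_iff, Prod.mk_zero_zero]
  · -- (iii)
    constructor
    · intro H v
      have h := congrArg Heis.t (H ⟨1, v.1, v.2⟩)
      simpa [Heis.Dneg, liftedMap, Prod.ext_iff, ← Prod.neg_mk] using h
    · intro H h
      have h1 : liftedMap (⇑ψb) χ (Heis.Dneg h) =
          ⟨h.t * χ (-h.toK), (ψb (-h.toK)).1, (ψb (-h.toK)).2⟩ := rfl
      rw [h1, H h.toK, show ψb (-h.toK) = -(ψb h.toK) from map_neg ψb h.toK]
      rfl
  · -- (iv)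
    intro f hf
    set ψf : KGrp g n k → KGrp g n k := fun v => (f ⟨1, v.1, v.2⟩).toK with hψf
    set χf : KGrp g n k → kˣ := fun v => (f ⟨1, v.1, v.2⟩).t with hχf
    have hdec : ∀ h : Heis g n k, f h = liftedMap ψf χf h := auto_decomp f hf
    have hadd : ∀ v w : KGrp g n k, ψf (v + w) = ψf v + ψf w :=
      auto_toK_add f hf
    have hfs : ∀ u : kˣ, f.symm ⟨u, 0, 0⟩ = ⟨u, 0, 0⟩ := auto_center_symm f hf
    set ψg : KGrp g n k → KGrp g n k := fun v => (f.symm ⟨1, v.1, v.2⟩).toK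
      with hψg
    have hli : Function.LeftInverse ψg ψf := fun v => by
      have := auto_toK_inv f hf v
      simpa [hψf, hψg] using this
    have hri : Function.RightInverse ψg ψf := fun v => by
      have := auto_toK_inv f.symm hfs v
      simpa [hψf, hψg] using this
    set Ψ : KGrp g n k ≃+ KGrp g n k := ⟨⟨ψf, ψg, hli, hri⟩, fun {x y} => hadd x y⟩ with hΨ
    have hΨapp : ∀ v, Ψ v = ψf v := fun v => rfl
    have hhom : ∀ a b : Heis g n k,
        liftedMap (⇑Ψ) χf (a * b) = liftedMap (⇑Ψ) χf a * liftedMap (⇑Ψ) χf b := by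
      intro a b
      have : ∀ h : Heis g n k, liftedMap (⇑Ψ) χf h = liftedMap ψf χf h :=
        fun h => rfl
      rw [this, this, this, ← hdec, ← hdec, ← hdec, map_mul]
    have hsc : IsSemiChar (⇑Ψ) χf :=
      (hom_iff_semiChar (⇑Ψ) (map_add Ψ) χf).mp hhom
    refine ⟨⟨Ψ, χf⟩, ⟨hsc, fun h => hdec h⟩, ?_⟩
    rintro ⟨p1, p2⟩ ⟨hp1, hp2⟩
    have heq : ∀ h : Heis g n k, liftedMap (⇑p1) p2 h = liftedMap ψf χf h :=
      fun h => by rw [← hp2, hdec]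
    have hψeq : ∀ v : KGrp g n k, p1 v = ψf v := by
      intro v
      have hx := congrArg Heis.x (heq ⟨1, v.1, v.2⟩)
      have hy := congrArg Heis.y (heq ⟨1, v.1, v.2⟩)
      simp only [liftedMap_x, liftedMap_y, toK_mk'] at hx hy
      exact Prod.ext hx hy
    have hχeq : p2 = χf := by
      funext v
      have ht := congrArg Heis.t (heq ⟨1, v.1, v.2⟩)
      simpa using ht
    exact Prod.ext (AddEquiv.ext fun v => hψeq v) hχeq

end ThetaPaper
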